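/- Let S₀ be a symmetric endomorphism of a finite-dimensional real inner product space V and suppose S(t) = S₀·J(t)⁻¹ is symmetric for each t ∈ [0, b), where J(t) ∈ GL(V) for all t and J depends continuously on t with J(0) = I. If [0, b) contains a point t₁ with J(t₁) = −I, then the number of positive eigenvalues of S₀ equals the number of negative eigenvalues of S₀. -/
import Mathlib

open scoped RealInnerProductSpace Topology

set_option linter.unusedSectionVars false
set_option linter.unusedVariables false

/-- The number of positive eigenvalues of a symmetric endomorphism, expressed as
the maximal dimension of a subspace on which the associated quadratic form is
positive definite. -/
noncomputable def posIndex {V : Type*} [NormedAddCommGroup V]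
    [InnerProductSpace ℝ V] [FiniteDimensional ℝ V] (T : V →ₗ[ℝ] V) : ℕ :=
  sSup {d | ∃ W : Submodule ℝ V, Module.finrank ℝ W = d ∧
    ∀ v ∈ W, v ≠ 0 → 0 < ⟪T v, v⟫}

/-- The number of negative eigenvalues of a symmetric endomorphism. -/
noncomputable def negIndex {V : Type*} [NormedAddCommGroup V]
    [InnerProductSpace ℝ V] [FiniteDimensional ℝ V] (T : V →ₗ[ℝ] V) : ℕ :=
  sSup {d | ∃ W : Submodule ℝ V, Module.finrank ℝ W = d ∧
    ∀ v ∈ W, v ≠ 0 → ⟪T v, v⟫ < 0}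

section Aux

variable {V : Type*} [NormedAddCommGroup V] [InnerProductSpace ℝ V] [FiniteDimensional ℝ V]

def indSet (Q : V → ℝ) : Set ℕ :=
  {d | ∃ W : Submodule ℝ V, Module.finrank ℝ W = d ∧ ∀ v ∈ W, v ≠ 0 → 0 < Q v}

lemma indSet_zero_mem (Q : V → ℝ) : 0 ∈ indSet Q :=
  ⟨⊥, finrank_bot ℝ V, fun v hv hne => absurd ((Submodule.mem_bot ℝ).1 hv) hne⟩

lemma indSet_bddAbove (Q : V → ℝ) : BddAbove (indSet Q) :=
  ⟨Module.finrank ℝ V, fun _ ⟨W, hW, _⟩ => hW ▸ W.finrank_le⟩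

lemma exists_indSet_max (Q : V → ℝ) :
    ∃ W : Submodule ℝ V, Module.finrank ℝ W = sSup (indSet Q) ∧
      ∀ v ∈ W, v ≠ 0 → 0 < Q v :=
  Nat.sSup_mem ⟨0, indSet_zero_mem Q⟩ (indSet_bddAbove Q)

lemma le_sSup_indSet {Q : V → ℝ} {d : ℕ} (h : d ∈ indSet Q) : d ≤ sSup (indSet Q) :=
  le_csSup (indSet_bddAbove Q) h

lemma span_finrank_eq_card {n : ℕ} (b : OrthonormalBasis (Fin n) ℝ V) (u : Finset (Fin n)) :
    Module.finrank ℝ (Submodule.span ℝ (⇑b '' ↑u)) = u.card := by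
  have h1 : LinearIndependent ℝ (fun i : u => b i) :=
    b.orthonormal.linearIndependent.comp _ Subtype.val_injective
  have h2 := finrank_span_eq_card h1
  have h3 : Set.range (fun i : u => b i) = ⇑b '' ↑u := by ext x; simp
  rw [h3] at h2
  rw [h2, Fintype.card_coe]

section sylvester

variable (T : V →ₗ[ℝ] V) (hT : T.IsSymmetric)

lemma form_eq_sum (v : V) :
    ⟪T v, v⟫ = ∑ i, hT.eigenvalues rfl i *
      ((hT.eigenvectorBasis rfl).repr v i * (hT.eigenvectorBasis rfl).repr v i) := by
  have h := (hT.eigenvectorBasis (n := Module.finrank ℝ V) rfl).repr.inner_map_map (T v) v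
  rw [← h]
  simp only [PiLp.inner_apply, RCLike.inner_apply, conj_trivial,
    hT.eigenvectorBasis_apply_self_apply rfl v, RCLike.ofReal_real_eq_id, id]
  exact Finset.sum_congr rfl fun i _ => by ring

open Finset in
lemma sSup_indSet_eq_card (σ : ℝ) :
    sSup (indSet fun v => σ * ⟪T v, v⟫) =
      (univ.filter fun i => 0 < σ * hT.eigenvalues rfl i).card := by
  classical
  set n := Module.finrank ℝ V with hn
  set b := hT.eigenvectorBasis (n := n) rfl with hb
  set μ := hT.eigenvalues (n := n) rfl with hμ
  set s : Finset (Fin n) := univ.filter fun i => 0 < σ * μ i with hs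
  have hform : ∀ v : V, σ * ⟪T v, v⟫ = ∑ i, (σ * μ i) * (b.repr v i * b.repr v i) := by
    intro v
    rw [form_eq_sum T hT v, Finset.mul_sum]
    exact Finset.sum_congr rfl fun i _ => by ring
  have hsupp : ∀ (u : Finset (Fin n)) (v : V), v ∈ Submodule.span ℝ (⇑b '' ↑u) →
      ∀ i, b.repr v i ≠ 0 → i ∈ u := by
    intro u v hv i hi
    have h1 : v ∈ Submodule.span ℝ (⇑b.toBasis '' ↑u) := by rwa [OrthonormalBasis.coe_toBasis]
    have h2 := (b.toBasis.mem_span_image).1 h1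
    have h3 : i ∈ (b.toBasis.repr v).support := by
      simp only [Finsupp.mem_support_iff, b.coe_toBasis_repr_apply]; exact hi
    exact h2 h3
  have hreprne : ∀ v : V, v ≠ 0 → ∃ i, b.repr v i ≠ 0 := by
    intro v hv
    by_contra h
    push_neg at h
    apply hv
    have : b.repr v = 0 := by ext i; exact h i
    simpa [map_eq_zero_iff] using congrArg b.repr.symm this
  apply le_antisymm
  · -- sSup ≤ card s
    obtain ⟨W, hWrank, hWpos⟩ := exists_indSet_max (fun v => σ * ⟪T v, v⟫)
    rw [← hWrank]
    set N := Submodule.span ℝ (⇑b '' ↑sᶜ) with hN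
    have hdisj : W ⊓ N = ⊥ := by
      rw [Submodule.eq_bot_iff]
      intro v ⟨hvW, hvN⟩
      by_contra hv0
      have hpos := hWpos v hvW hv0
      have hle : σ * ⟪T v, v⟫ ≤ 0 := by
        rw [hform v]
        apply Finset.sum_nonpos
        intro i _
        rcases eq_or_ne (b.repr v i) 0 with h | h
        · simp [h]
        · have hi : i ∈ sᶜ := hsupp sᶜ v hvN i h
          have : ¬ (0 < σ * μ i) := by simpa [hs] using hi
          exact mul_nonpos_of_nonpos_of_nonneg (le_of_not_gt this) (mul_self_nonneg _)
      linarith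
    have hN_rank : Module.finrank ℝ N = sᶜ.card := span_finrank_eq_card b sᶜ
    have hsum := Submodule.finrank_sup_add_finrank_inf_eq W N
    rw [hdisj] at hsum
    simp only [finrank_bot, add_zero] at hsum
    have hle : Module.finrank ℝ ↥(W ⊔ N) ≤ n := Submodule.finrank_le _
    have hcards : s.card + sᶜ.card = n := by
      rw [Finset.card_add_card_compl, Fintype.card_fin]
    omega
  · -- card s ≤ sSup
    apply le_sSup_indSet
    refine ⟨Submodule.span ℝ (⇑b '' ↑s), span_finrank_eq_card b s, ?_⟩
    intro v hv hv0
    show 0 < σ * ⟪T v, v⟫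
    rw [hform v]
    apply Finset.sum_pos'
    · intro i _
      rcases eq_or_ne (b.repr v i) 0 with h | h
      · simp [h]
      · have hi : i ∈ s := hsupp s v hv i h
        have : 0 < σ * μ i := by simpa [hs] using hi
        exact (mul_pos this (mul_self_pos.2 h)).le
    · obtain ⟨i, hi⟩ := hreprne v hv0
      refine ⟨i, Finset.mem_univ i, ?_⟩
      have hmem : i ∈ s := hsupp s v hv i hi
      have h1 : 0 < σ * μ i := by simpa [hs] using hmem
      have h2 : 0 < b.repr v i * b.repr v i := mul_self_pos.2 hi
      exact mul_pos h1 h2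

open Finset in
lemma rank_eq_card_ne :
    Module.finrank ℝ (LinearMap.range T) =
      (univ.filter fun i => hT.eigenvalues rfl i ≠ 0).card := by
  classical
  set n := Module.finrank ℝ V with hn
  set b := hT.eigenvectorBasis (n := n) rfl with hb
  set μ := hT.eigenvalues (n := n) rfl with hμ
  set s : Finset (Fin n) := univ.filter fun i => μ i ≠ 0 with hs
  have key : LinearMap.range T = Submodule.span ℝ (⇑b '' ↑s) := by
    apply le_antisymm
    · rintro x ⟨v, rfl⟩
      have h1 : (T v) ∈ Submodule.span ℝ (⇑b.toBasis '' ↑s) := by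
        rw [b.toBasis.mem_span_image]
        intro i hi
        rw [Finset.mem_coe, Finsupp.mem_support_iff, b.coe_toBasis_repr_apply,
          hT.eigenvectorBasis_apply_self_apply rfl v i] at hi
        have hμi : μ i ≠ 0 := by
          intro h0
          apply hi
          simp only [RCLike.ofReal_real_eq_id, id]
          exact mul_eq_zero_of_left h0 _
        simp [hs, hμi]
      rwa [OrthonormalBasis.coe_toBasis] at h1
    · rw [Submodule.span_le]
      rintro x ⟨i, hi, rfl⟩
      have hμi : μ i ≠ 0 := by simpa [hs] using hi
      refine ⟨(μ i)⁻¹ • b i, ?_⟩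
      rw [map_smul]
      have h4 : T (b i) = μ i • b i := hT.apply_eigenvectorBasis rfl i
      rw [h4, smul_smul, inv_mul_cancel₀ hμi, one_smul]
  rw [key, span_finrank_eq_card]

end sylvester

lemma posdef_stable (T : V →L[ℝ] V) (W : Submodule ℝ V)
    (h : ∀ v ∈ W, v ≠ 0 → 0 < ⟪T v, v⟫) :
    ∃ ε > 0, ∀ T' : V →L[ℝ] V, ‖T' - T‖ < ε → ∀ v ∈ W, v ≠ 0 → 0 < ⟪T' v, v⟫ := by
  rcases eq_or_ne W ⊥ with rfl | hW
  · exact ⟨1, one_pos, fun T' _ v hv hv0 => absurd ((Submodule.mem_bot ℝ).1 hv) hv0⟩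
  · obtain ⟨w, hwW, hw0⟩ := W.ne_bot_iff.1 hW
    set K : Set V := (W : Set V) ∩ Metric.sphere 0 1 with hK
    have hKc : IsCompact K := (isCompact_sphere 0 1).inter_left W.closed_of_finiteDimensional
    have hKne : K.Nonempty := by
      refine ⟨‖w‖⁻¹ • w, W.smul_mem _ hwW, ?_⟩
      rw [Metric.mem_sphere, dist_zero_right]
      exact norm_smul_inv_norm hw0
    have hf : Continuous fun v : V => ⟪(T : V →L[ℝ] V) v, v⟫ :=
      Continuous.inner T.continuous continuous_id
    obtain ⟨v₀, hv₀K, hv₀min⟩ := hKc.exists_isMinOn hKne hf.continuousOn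
    have hv₀W : v₀ ∈ W := hv₀K.1
    have hv₀n : ‖v₀‖ = 1 := by
      have := hv₀K.2; rwa [Metric.mem_sphere, dist_zero_right] at this
    have hv₀0 : v₀ ≠ 0 := by intro h0; rw [h0, norm_zero] at hv₀n; norm_num at hv₀n
    refine ⟨⟪T v₀, v₀⟫, h v₀ hv₀W hv₀0, ?_⟩
    intro T' hT' v hvW hv0
    have hvn : (0:ℝ) < ‖v‖ := norm_pos_iff.2 hv0
    set u : V := ‖v‖⁻¹ • v with hu
    have huK : u ∈ K := by
      refine ⟨W.smul_mem _ hvW, ?_⟩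
      rw [Metric.mem_sphere, dist_zero_right]
      exact norm_smul_inv_norm hv0
    have hun : ‖u‖ = 1 := by
      have := huK.2; rwa [Metric.mem_sphere, dist_zero_right] at this
    -- estimate on the unit vector u
    have hTu : ⟪T v₀, v₀⟫ ≤ ⟪T u, u⟫ := hv₀min huK
    have hdiff : |⟪(T' - T) u, u⟫| ≤ ‖T' - T‖ := by
      calc |⟪(T' - T) u, u⟫| ≤ ‖(T' - T) u‖ * ‖u‖ := abs_real_inner_le_norm _ _
        _ ≤ (‖T' - T‖ * ‖u‖) * ‖u‖ := by
            exact mul_le_mul_of_nonneg_right ((T' - T).le_opNorm u) (norm_nonneg _)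
        _ = ‖T' - T‖ := by rw [hun]; ring
    have hsplit : ⟪T' u, u⟫ = ⟪T u, u⟫ + ⟪(T' - T) u, u⟫ := by
      rw [ContinuousLinearMap.sub_apply, inner_sub_left]; ring
    have hTu' : 0 < ⟪T' u, u⟫ := by
      rw [hsplit]
      have := abs_le.1 hdiff
      linarith
    -- rescale
    have hscale : ⟪T' u, u⟫ = ‖v‖⁻¹ * (‖v‖⁻¹ * ⟪T' v, v⟫) := by
      rw [hu, ContinuousLinearMap.map_smul, real_inner_smul_left, real_inner_smul_right]
    rw [hscale] at hTu'
    by_contra hle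
    push_neg at hle
    have h1 : ‖v‖⁻¹ * ⟪T' v, v⟫ ≤ 0 :=
      mul_nonpos_of_nonneg_of_nonpos (inv_nonneg.2 hvn.le) hle
    have h2 : ‖v‖⁻¹ * (‖v‖⁻¹ * ⟪T' v, v⟫) ≤ 0 :=
      mul_nonpos_of_nonneg_of_nonpos (inv_nonneg.2 hvn.le) h1
    linarith

lemma posIndex_eq_sSup (T : V →ₗ[ℝ] V) :
    posIndex T = sSup (indSet fun v => ⟪T v, v⟫) := rfl

lemma negIndex_eq_sSup (T : V →ₗ[ℝ] V) :
    negIndex T = sSup (indSet fun v => ⟪(-T) v, v⟫) := by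
  unfold negIndex indSet
  congr 1
  ext d
  refine exists_congr fun W => and_congr_right fun _ =>
    forall_congr' fun v => forall_congr' fun _ => forall_congr' fun _ => ?_
  simp [neg_pos]

lemma posIndex_neg (T : V →ₗ[ℝ] V) : posIndex (-T) = negIndex T := by
  rw [negIndex_eq_sSup, posIndex_eq_sSup]

open Finset in
lemma posIndex_add_negIndex (T : V →ₗ[ℝ] V) (hT : T.IsSymmetric) :
    posIndex T + negIndex T = Module.finrank ℝ (LinearMap.range T) := by
  classical
  have e1 : (fun v : V => (1:ℝ) * ⟪T v, v⟫) = fun v => ⟪T v, v⟫ := by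
    funext v; rw [one_mul]
  have e2 : (fun v : V => (-1:ℝ) * ⟪T v, v⟫) = fun v => ⟪(-T) v, v⟫ := by
    funext v; simp
  have h1 : posIndex T = (univ.filter fun i => 0 < (1:ℝ) * hT.eigenvalues rfl i).card := by
    rw [posIndex_eq_sSup, ← e1, sSup_indSet_eq_card T hT 1]
  have h2 : negIndex T = (univ.filter fun i => 0 < (-1:ℝ) * hT.eigenvalues rfl i).card := by
    rw [negIndex_eq_sSup, ← e2, sSup_indSet_eq_card T hT (-1)]
  rw [h1, h2, rank_eq_card_ne T hT]
  simp only [one_mul, neg_one_mul, neg_pos]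
  have hdisj : Disjoint (univ.filter fun i => 0 < hT.eigenvalues rfl i)
      (univ.filter fun i => hT.eigenvalues rfl i < 0) := by
    rw [Finset.disjoint_filter]
    intro i _ hpos
    exact not_lt.2 hpos.le
  rw [← Finset.card_union_of_disjoint hdisj, ← Finset.filter_or]
  apply congrArg
  apply Finset.filter_congr
  intro i _
  constructor
  · rintro (h | h) <;> [exact ne_of_gt h; exact ne_of_lt h]
  · intro h
    rcases h.lt_or_gt with h | h
    · exact Or.inr h
    · exact Or.inl h

end Aux

/-- if `S(t) = S₀·J(t)⁻¹` is symmetric for a continuous family of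
invertible operators `J` with `J(0) = I`, and `J(t₁) = −I` for some `t₁ ∈ [0, b)`,
then `S₀` has equally many positive and negative eigenvalues. -/
theorem stmt_8 {V : Type*} [NormedAddCommGroup V] [InnerProductSpace ℝ V]
    [FiniteDimensional ℝ V]
    (b : ℝ) (S₀ : V →L[ℝ] V) (J : ℝ → (V →L[ℝ] V))
    (hS₀ : LinearMap.IsSymmetric (S₀ : V →ₗ[ℝ] V))
    (hJcont : Continuous J) (hJ0 : J 0 = 1)
    (hJinv : ∀ t ∈ Set.Ico (0 : ℝ) b, IsUnit (J t))
    (hsymm : ∀ t ∈ Set.Ico (0 : ℝ) b,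
      LinearMap.IsSymmetric ((S₀ * Ring.inverse (J t) : V →L[ℝ] V) : V →ₗ[ℝ] V))
    (t₁ : ℝ) (ht₁ : t₁ ∈ Set.Ico (0 : ℝ) b) (hJt₁ : J t₁ = -1) :
    posIndex (S₀ : V →ₗ[ℝ] V) = negIndex (S₀ : V →ₗ[ℝ] V) := by
  classical
  have hIccsub : Set.Icc (0:ℝ) t₁ ⊆ Set.Ico 0 b :=
    fun t ht => ⟨ht.1, lt_of_le_of_lt ht.2 ht₁.2⟩
  set Sf : ℝ → (V →L[ℝ] V) := fun t => S₀ * Ring.inverse (J t) with hSf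
  set r := Module.finrank ℝ (LinearMap.range ((S₀ : V →L[ℝ] V) : V →ₗ[ℝ] V)) with hr
  -- rank invariance
  have hrank : ∀ t ∈ Set.Ico (0:ℝ) b,
      Module.finrank ℝ (LinearMap.range ((Sf t : V →L[ℝ] V) : V →ₗ[ℝ] V)) = r := by
    intro t ht
    have hu := hJinv t ht
    have hinv : Ring.inverse (J t) = ↑hu.unit⁻¹ := by
      conv_lhs => rw [← hu.unit_spec]
      rw [Ring.inverse_unit]
    have hsurj : LinearMap.range (((hu.unit⁻¹ : (V →L[ℝ] V)ˣ) : V →L[ℝ] V) : V →ₗ[ℝ] V) = ⊤ := by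
      rw [LinearMap.range_eq_top]
      intro x
      refine ⟨((hu.unit : (V →L[ℝ] V)ˣ) : V →L[ℝ] V) x, ?_⟩
      show ((hu.unit⁻¹ : (V →L[ℝ] V)ˣ) : V →L[ℝ] V) (((hu.unit : (V →L[ℝ] V)ˣ) : V →L[ℝ] V) x) = x
      calc ((hu.unit⁻¹ : (V →L[ℝ] V)ˣ) : V →L[ℝ] V) (((hu.unit : (V →L[ℝ] V)ˣ) : V →L[ℝ] V) x)
          = ((((hu.unit⁻¹ : (V →L[ℝ] V)ˣ) : V →L[ℝ] V) * ((hu.unit : (V →L[ℝ] V)ˣ) : V →L[ℝ] V))) x := rfl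
        _ = (1 : V →L[ℝ] V) x := by rw [Units.inv_mul]
        _ = x := rfl
    show Module.finrank ℝ
      (LinearMap.range ((S₀ * Ring.inverse (J t) : V →L[ℝ] V) : V →ₗ[ℝ] V)) = r
    rw [hinv]
    have hcomp : ((S₀ * ((hu.unit⁻¹ : (V →L[ℝ] V)ˣ) : V →L[ℝ] V) : V →L[ℝ] V) : V →ₗ[ℝ] V)
        = ((S₀ : V →L[ℝ] V) : V →ₗ[ℝ] V) ∘ₗ
          (((hu.unit⁻¹ : (V →L[ℝ] V)ˣ) : V →L[ℝ] V) : V →ₗ[ℝ] V) := rfl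
    rw [hcomp, LinearMap.range_comp_of_range_eq_top _ hsurj]
  -- continuity
  have hScont : ∀ t ∈ Set.Ico (0:ℝ) b, ContinuousAt Sf t := by
    intro t ht
    have h1 : ContinuousAt Ring.inverse (J t) := by
      have := NormedRing.inverse_continuousAt (hJinv t ht).unit
      rwa [(hJinv t ht).unit_spec] at this
    exact continuousAt_const.mul (h1.comp hJcont.continuousAt)
  -- index sum
  have hsum : ∀ t ∈ Set.Ico (0:ℝ) b,
      posIndex ((Sf t : V →L[ℝ] V) : V →ₗ[ℝ] V) +
        negIndex ((Sf t : V →L[ℝ] V) : V →ₗ[ℝ] V) = r := by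
    intro t ht
    rw [posIndex_add_negIndex _ (hsymm t ht), hrank t ht]
  -- local constancy of the positive index
  have hloc : ∀ t₀ ∈ Set.Icc (0:ℝ) t₁, ∀ᶠ t in 𝓝 t₀, t ∈ Set.Icc (0:ℝ) t₁ →
      posIndex ((Sf t : V →L[ℝ] V) : V →ₗ[ℝ] V)
        = posIndex ((Sf t₀ : V →L[ℝ] V) : V →ₗ[ℝ] V) := by
    intro t₀ ht₀
    have ht₀b := hIccsub ht₀
    obtain ⟨Wp, hWpr, hWpp⟩ :=
      exists_indSet_max (fun v => ⟪((Sf t₀ : V →L[ℝ] V) : V →ₗ[ℝ] V) v, v⟫)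
    obtain ⟨Wn, hWnr, hWnp⟩ :=
      exists_indSet_max (fun v => ⟪(-((Sf t₀ : V →L[ℝ] V) : V →ₗ[ℝ] V)) v, v⟫)
    obtain ⟨εp, hεp, hstabp⟩ := posdef_stable (Sf t₀) Wp hWpp
    obtain ⟨εn, hεn, hstabn⟩ := posdef_stable (-(Sf t₀)) Wn hWnp
    set ε := min εp εn with hε
    have hεpos : 0 < ε := lt_min hεp hεn
    have hev : ∀ᶠ t in 𝓝 t₀, ‖Sf t - Sf t₀‖ < ε := by
      have hball : ∀ᶠ A in 𝓝 (Sf t₀), A ∈ Metric.ball (Sf t₀) ε :=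
        Metric.ball_mem_nhds _ hεpos
      have h2 := (hScont t₀ ht₀b).eventually hball
      exact h2.mono fun t ht => by rwa [Metric.mem_ball, dist_eq_norm] at ht
    refine hev.mono ?_
    intro t hdist htmem
    have htb := hIccsub htmem
    have hp : posIndex ((Sf t₀ : V →L[ℝ] V) : V →ₗ[ℝ] V)
        ≤ posIndex ((Sf t : V →L[ℝ] V) : V →ₗ[ℝ] V) := by
      rw [posIndex_eq_sSup, posIndex_eq_sSup]
      exact le_sSup_indSet ⟨Wp, hWpr, fun v hv h0 =>
        hstabp (Sf t) (lt_of_lt_of_le hdist (min_le_left _ _)) v hv h0⟩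
    have hn : negIndex ((Sf t₀ : V →L[ℝ] V) : V →ₗ[ℝ] V)
        ≤ negIndex ((Sf t : V →L[ℝ] V) : V →ₗ[ℝ] V) := by
      rw [negIndex_eq_sSup, negIndex_eq_sSup]
      refine le_sSup_indSet ⟨Wn, hWnr, ?_⟩
      intro v hv h0
      exact hstabn (-(Sf t))
        (by rw [neg_sub_neg, norm_sub_rev]; exact lt_of_lt_of_le hdist (min_le_right _ _))
        v hv h0
    have h1 := hsum t htb
    have h2 := hsum t₀ ht₀b
    omega
  -- conclude via connectedness
  have h0t₁ : (0:ℝ) ≤ t₁ := ht₁.1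
  set f : Set.Icc (0:ℝ) t₁ → ℕ :=
    fun x => posIndex ((Sf ↑x : V →L[ℝ] V) : V →ₗ[ℝ] V) with hf
  have hflc : IsLocallyConstant f := by
    rw [IsLocallyConstant.iff_eventually_eq]
    intro x
    have h := hloc ↑x x.2
    rw [nhds_subtype_eq_comap, Filter.eventually_comap]
    refine h.mono ?_
    intro t ht y hy
    subst hy
    exact ht y.2
  haveI : PreconnectedSpace (Set.Icc (0:ℝ) t₁) := Subtype.preconnectedSpace isPreconnected_Icc
  have hkey := hflc.apply_eq_of_preconnectedSpace
    ⟨t₁, Set.right_mem_Icc.2 h0t₁⟩ ⟨0, Set.left_mem_Icc.2 h0t₁⟩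
  have hS0 : Sf 0 = S₀ := by
    show S₀ * Ring.inverse (J 0) = S₀
    rw [hJ0, Ring.inverse_one, mul_one]
  have hneg1 : Ring.inverse (J t₁) = (-1 : V →L[ℝ] V) := by
    rw [hJt₁]
    have := Ring.inverse_unit (⟨-1, -1, by simp, by simp⟩ : (V →L[ℝ] V)ˣ)
    exact this
  have hSt₁ : Sf t₁ = -S₀ := by
    show S₀ * Ring.inverse (J t₁) = -S₀
    rw [hneg1, mul_neg_one]
  have hkey' : posIndex ((Sf t₁ : V →L[ℝ] V) : V →ₗ[ℝ] V)
      = posIndex ((Sf 0 : V →L[ℝ] V) : V →ₗ[ℝ] V) := hkey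
  rw [hS0, hSt₁] at hkey'
  have hcoe : ((-S₀ : V →L[ℝ] V) : V →ₗ[ℝ] V) = -((S₀ : V →L[ℝ] V) : V →ₗ[ℝ] V) := rfl
  rw [hcoe, posIndex_neg] at hkey'
  exact hkey'.symm
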